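/- Let Γ be a graph with n vertices, m edges, and c connected components. Then the number of switching equivalence classes of signed graphs on Γ is 2^{m−n+c}. -/

import Mathlib

open SimpleGraph

variable {V : Type*}

/-- The factor `θ(u)θ(v)` attached to an edge `{u,v}`. -/
def switchFactor (θ : V → ℤˣ) : Sym2 V → ℤˣ :=
  Sym2.lift ⟨fun u v => θ u * θ v, fun _ _ => mul_comm _ _⟩

/-- The switched sign function `σ^θ`, with `σ^θ(uv) = θ(u)σ(uv)θ(v)`. -/
def switched (G : SimpleGraph V) (σ : G.edgeSet → ℤˣ) (θ : V → ℤˣ) :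
    G.edgeSet → ℤˣ := fun e => switchFactor θ e.val * σ e

/-- Two sign functions are switching equivalent if one is a switching of the other. -/
def SwitchEquiv (G : SimpleGraph V) (σ₁ σ₂ : G.edgeSet → ℤˣ) : Prop :=
  ∃ θ : V → ℤˣ, σ₂ = switched G σ₁ θ

@[simp] lemma switchFactor_mk (θ : V → ℤˣ) (u v : V) :
    switchFactor θ s(u, v) = θ u * θ v := rfl

/-- The switching homomorphism from vertex signings to edge signings. -/
def switchHom (G : SimpleGraph V) : (V → ℤˣ) →* (G.edgeSet → ℤˣ) where
  toFun θ := fun e => switchFactor θ e.val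
  map_one' := by
    funext e
    obtain ⟨e, he⟩ := e
    induction e using Sym2.inductionOn with
    | hf u v => simp
  map_mul' θ η := by
    funext e
    obtain ⟨e, he⟩ := e
    induction e using Sym2.inductionOn with
    | hf u v =>
      exact mul_mul_mul_comm _ _ _ _

lemma units_eq_of_mul_eq_one {a b : ℤˣ} (h : a * b = 1) : a = b := by
  calc a = a * (b * b) := by rw [Int.units_mul_self b, mul_one]
    _ = (a * b) * b := (mul_assoc a b b).symm
    _ = b := by rw [h, one_mul]

lemma ker_reachable {G : SimpleGraph V} {θ : V → ℤˣ}
    (hθ : θ ∈ (switchHom G).ker) {u v : V} (h : G.Reachable u v) : θ u = θ v := by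
  obtain ⟨p⟩ := h
  induction p with
  | nil => rfl
  | cons hadj p ih =>
    rename_i a b c
    refine Eq.trans ?_ ih
    have h1 : switchHom G θ ⟨s(a, b), hadj⟩ = 1 := by rw [hθ]; rfl
    exact units_eq_of_mul_eq_one h1

/-- The kernel of the switching homomorphism is the signings constant on components. -/
noncomputable def kerEquiv (G : SimpleGraph V) :
    (switchHom G).ker ≃ (G.ConnectedComponent → ℤˣ) where
  toFun θ := ConnectedComponent.lift θ.1 fun v w p _ => ker_reachable θ.2 ⟨p⟩
  invFun f := ⟨fun v => f (G.connectedComponentMk v), by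
    rw [MonoidHom.mem_ker]
    funext e
    obtain ⟨e, he⟩ := e
    induction e using Sym2.inductionOn with
    | hf u v =>
      show f (G.connectedComponentMk u) * f (G.connectedComponentMk v) = 1
      rw [ConnectedComponent.sound ((SimpleGraph.mem_edgeSet G).mp he).reachable,
        Int.units_mul_self]⟩
  left_inv θ := by ext v; rfl
  right_inv f := by
    funext c
    induction c using ConnectedComponent.ind with
    | _ v => rfl

theorem card_switching_classes (G : SimpleGraph V) [Fintype V]
    [DecidableRel G.Adj] :
    Nat.card (Quot (SwitchEquiv G)) =
      2 ^ (G.edgeFinset.card + Nat.card G.ConnectedComponent - Fintype.card V) := by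
  classical
  set H := (switchHom G).range with hH
  -- the quotient by switching equivalence is the group quotient by `H`
  have hrel : ∀ σ₁ σ₂ : G.edgeSet → ℤˣ,
      SwitchEquiv G σ₁ σ₂ ↔ (QuotientGroup.leftRel H) σ₁ σ₂ := by
    intro σ₁ σ₂
    rw [QuotientGroup.leftRel_apply]
    constructor
    · rintro ⟨θ, rfl⟩
      refine ⟨θ, ?_⟩
      funext e
      show switchFactor θ e.val = (σ₁ e)⁻¹ * (switchFactor θ e.val * σ₁ e)
      rw [mul_comm (switchFactor θ e.val), inv_mul_cancel_left]
    · rintro ⟨θ, hθ⟩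
      refine ⟨θ, ?_⟩
      funext e
      have h1 : switchFactor θ e.val = (σ₁ e)⁻¹ * σ₂ e := by
        have : switchHom G θ e = (σ₁⁻¹ * σ₂) e := by rw [hθ]
        exact this
      show σ₂ e = switchFactor θ e.val * σ₁ e
      rw [h1, mul_comm, mul_inv_cancel_left]
  have e1 : Quot (SwitchEquiv G) ≃ (G.edgeSet → ℤˣ) ⧸ H := by
    refine Quot.congrRight hrel |>.trans ?_
    exact Quotient.congrRight fun a b => Iff.rfl
  have e2 : ((V → ℤˣ) ⧸ (switchHom G).ker) ≃ H :=
    (QuotientGroup.quotientKerEquivRange (switchHom G)).toEquiv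
  have cardA : Nat.card (G.edgeSet → ℤˣ) = 2 ^ G.edgeFinset.card := by
    rw [Nat.card_fun, Nat.card_eq_fintype_card, Fintype.card_units_int,
      Nat.card_eq_fintype_card, ← SimpleGraph.edgeFinset_card]
  have cardV : Nat.card (V → ℤˣ) = 2 ^ Fintype.card V := by
    rw [Nat.card_fun, Nat.card_eq_fintype_card, Fintype.card_units_int,
      Nat.card_eq_fintype_card]
  have cardKer : Nat.card (switchHom G).ker = 2 ^ Nat.card G.ConnectedComponent := by
    rw [Nat.card_congr (kerEquiv G), Nat.card_fun, Nat.card_eq_fintype_card,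
      Fintype.card_units_int]
  have key1 : Nat.card (G.edgeSet → ℤˣ) =
      Nat.card ((G.edgeSet → ℤˣ) ⧸ H) * Nat.card H :=
    Subgroup.card_eq_card_quotient_mul_card_subgroup H
  have key2 : Nat.card (V → ℤˣ) =
      Nat.card ((V → ℤˣ) ⧸ (switchHom G).ker) * Nat.card (switchHom G).ker :=
    Subgroup.card_eq_card_quotient_mul_card_subgroup _
  rw [Nat.card_congr e2] at key2
  rw [cardA] at key1
  rw [cardV, cardKer] at key2
  rw [Nat.card_congr e1]
  set Q := Nat.card ((G.edgeSet → ℤˣ) ⧸ H)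
  set m := G.edgeFinset.card
  set n := Fintype.card V
  set c := Nat.card G.ConnectedComponent
  -- Q * Nat.card H = 2^m, Nat.card H * 2^c = 2^n
  have hQ : Q * 2 ^ n = 2 ^ (m + c) := by
    calc Q * 2 ^ n = Q * (Nat.card H * 2 ^ c) := by rw [key2]
      _ = (Q * Nat.card H) * 2 ^ c := by ring
      _ = 2 ^ m * 2 ^ c := by rw [← key1]
      _ = 2 ^ (m + c) := by rw [pow_add]
  have hQpos : 0 < Q := Nat.card_pos
  have hle : n ≤ m + c := by
    by_contra hlt
    push_neg at hlt
    have : 2 ^ (m + c) < Q * 2 ^ n := by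
      calc 2 ^ (m + c) < 2 ^ n := Nat.pow_lt_pow_right one_lt_two hlt
        _ ≤ Q * 2 ^ n := Nat.le_mul_of_pos_left _ hQpos
    omega
  have : Q * 2 ^ n = 2 ^ (m + c - n) * 2 ^ n := by
    rw [← pow_add, Nat.sub_add_cancel hle, hQ]
  exact Nat.eq_of_mul_eq_mul_right (by positivity : 0 < 2 ^ n) this
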